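/- (Proposition 1, Reformulation of the zero-capacity hypercube model.) Let (p_n)_{n=0}^{N} be a solution of the conditional probability formulation with p_n(m) ≥ 0 for all n and m ∈ C_n, and suppose λ(n) > 0 for 0 ≤ n ≤ N−1 and μ(n) > 0 for 1 ≤ n ≤ N. Define p(0) = (1 + Σ_{n=1}^{N} ∏_{s=1}^{n} λ(s−1)/μ(s))^{−1} and p(n) = (∏_{s=1}^{n} λ(s−1)/μ(s))·p(0) for 1 ≤ n ≤ N. Then the function P(m) := p(w(m))·p_{w(m)}(m) satisfies the steady-state balance equations of the hypercube model, including the normalization Σ_m P(m) = 1. -/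

import Mathlib

open Finset Filter

/-- Number of busy units in state `B`. -/
def wt {N : ℕ} (B : Fin N → Bool) : ℕ := (Finset.univ.filter fun i => B i = true).card

/-- The layer `C_n`: states with exactly `n` busy units. -/
def layer (N n : ℕ) : Finset (Fin N → Bool) := Finset.univ.filter fun B => wt B = n

/-- The full state: all units busy. -/
def fullState (N : ℕ) : Fin N → Bool := fun _ => true

/-- Unit `i` is the most preferred free unit at node `j` in state `l`
(ranks are given by the permutation `ζ j`). -/
def dispatched {N J : ℕ} (ζ : Fin J → (Fin N ≃ Fin N)) (l : Fin N → Bool) (j : Fin J)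
    (i : Fin N) : Prop :=
  l i = false ∧ ∀ h : Fin N, (h : ℕ) < ((ζ j).symm i : ℕ) → l ((ζ j) h) = true

instance {N J : ℕ} (ζ : Fin J → (Fin N ≃ Fin N)) (l : Fin N → Bool) (j : Fin J) (i : Fin N) :
    Decidable (dispatched ζ l j i) := by
  unfold dispatched; infer_instance

/-- Upward transition rate `λ_{lm}`: nonzero only if `m` arises from `l` by flipping
one coordinate `i` from free to busy, in which case it is `λ` times the total demand
fraction of the nodes dispatching unit `i` in state `l`. -/
noncomputable def upRate {N J : ℕ} (lam : ℝ) (f : Fin J → ℝ) (ζ : Fin J → (Fin N ≃ Fin N))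
    (l m : Fin N → Bool) : ℝ :=
  ∑ i : Fin N,
    if l i = false ∧ m = Function.update l i true then
      lam * ∑ j : Fin J, if dispatched ζ l j i then f j else 0
    else 0

/-- Downward transition rate `μ_{lm}`: nonzero only if `m` arises from `l` by flipping
one coordinate `i` from busy to free, in which case it is `ν i`. -/
noncomputable def downRate {N : ℕ} (ν : Fin N → ℝ) (l m : Fin N → Bool) : ℝ :=
  ∑ i : Fin N, if l i = true ∧ m = Function.update l i false then ν i else 0

/-- Total upward rate `λ_m = Σ_l λ_{ml}` out of state `m`. -/
noncomputable def totalUp {N J : ℕ} (lam : ℝ) (f : Fin J → ℝ) (ζ : Fin J → (Fin N ≃ Fin N))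
    (m : Fin N → Bool) : ℝ :=
  ∑ l : Fin N → Bool, upRate lam f ζ m l

/-- Total service completion rate `μ_m = Σ_{i busy} ν i` out of state `m`. -/
noncomputable def totalDown {N : ℕ} (ν : Fin N → ℝ) (m : Fin N → Bool) : ℝ :=
  ∑ i : Fin N, if m i = true then ν i else 0

/-- `C^m_n`: the states of layer `n` at Hamming distance 1 from `m`. -/
def adjLayer {N : ℕ} (n : ℕ) (m : Fin N → Bool) : Finset (Fin N → Bool) :=
  (layer N n).filter fun l => (Finset.univ.filter fun i => l i ≠ m i).card = 1

/-- `λ(n) = Σ_{m ∈ C_n} p_n(m) · λ_m`. -/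
noncomputable def layerLamOf {N J : ℕ} (lam : ℝ) (f : Fin J → ℝ) (ζ : Fin J → (Fin N ≃ Fin N))
    (p : ℕ → (Fin N → Bool) → ℝ) (n : ℕ) : ℝ :=
  ∑ m ∈ layer N n, p n m * totalUp lam f ζ m

/-- `μ(n) = Σ_{m ∈ C_n} p_n(m) · μ_m`. -/
noncomputable def layerMuOf {N : ℕ} (ν : Fin N → ℝ) (p : ℕ → (Fin N → Bool) → ℝ) (n : ℕ) : ℝ :=
  ∑ m ∈ layer N n, p n m * totalDown ν m

/-- The conditional probability formulation of the hypercube model. -/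
def IsCondSolution {N J : ℕ} (lam : ℝ) (f : Fin J → ℝ) (ζ : Fin J → (Fin N ≃ Fin N))
    (ν : Fin N → ℝ) (p : ℕ → (Fin N → Bool) → ℝ) : Prop :=
  (∀ m ∈ layer N 0, p 0 m = 1) ∧
  (∀ m ∈ layer N N, p N m = 1) ∧
  (∀ n, 1 ≤ n → n ≤ N - 1 → ∀ m ∈ layer N n,
    p n m =
      (∑ l ∈ layer N (n - 1),
        p (n - 1) l * (layerMuOf ν p n / layerLamOf lam f ζ p (n - 1)) *
          (upRate lam f ζ l m / (totalUp lam f ζ m + totalDown ν m))) +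
      (∑ l ∈ adjLayer (n + 1) m,
        p (n + 1) l * (layerLamOf lam f ζ p n / layerMuOf ν p (n + 1)) *
          (downRate ν l m / (totalUp lam f ζ m + totalDown ν m)))) ∧
  (∀ n ≤ N, ∑ m ∈ layer N n, p n m = 1)

/-- The steady-state balance equations of the hypercube model, with normalization. -/
def SatisfiesBalance {N J : ℕ} (lam : ℝ) (f : Fin J → ℝ) (ζ : Fin J → (Fin N ≃ Fin N))
    (ν : Fin N → ℝ) (P : (Fin N → Bool) → ℝ) : Prop :=
  (∀ m : Fin N → Bool,
    P m * (totalUp lam f ζ m + totalDown ν m) =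
      (∑ l : Fin N → Bool, P l * upRate lam f ζ l m) +
      (∑ l : Fin N → Bool, P l * downRate ν l m)) ∧
  (∑ m : Fin N → Bool, P m = 1)
section AuxLemmas

variable {N J : ℕ}

lemma wt_le (m : Fin N → Bool) : wt m ≤ N := by
  classical
  simpa [wt] using (Finset.card_filter_le Finset.univ fun i => m i = true)

lemma eq_bot_of_wt_zero {m : Fin N → Bool} (h : wt m = 0) : m = fun _ => false := by
  classical
  funext i
  have h' := Finset.card_eq_zero.mp h
  have := Finset.eq_empty_iff_forall_notMem.mp h' i
  simp at this
  simp [this]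

lemma eq_full_of_wt_top {m : Fin N → Bool} (h : wt m = N) : m = fullState N := by
  classical
  have h' : (Finset.univ.filter fun i => m i = true) = Finset.univ := by
    apply Finset.eq_univ_of_card
    simpa [wt, Fintype.card_fin] using h
  funext i
  have := Finset.mem_filter.mp (h' ▸ Finset.mem_univ i)
  simpa [fullState] using this.2

lemma wt_update_true {l : Fin N → Bool} {i : Fin N} (h : l i = false) :
    wt (Function.update l i true) = wt l + 1 := by
  classical
  have hset : (Finset.univ.filter fun j => Function.update l i true j = true)
      = insert i (Finset.univ.filter fun j => l j = true) := by
    ext j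
    rcases eq_or_ne j i with rfl | hj
    · simp
    · simp [Function.update_of_ne hj, hj]
  have hi : i ∉ Finset.univ.filter fun j => l j = true := by simp [h]
  simp [wt, hset, Finset.card_insert_of_notMem hi]

lemma wt_update_false {l : Fin N → Bool} {i : Fin N} (h : l i = true) :
    wt (Function.update l i false) + 1 = wt l := by
  classical
  have hset : (Finset.univ.filter fun j => l j = true)
      = insert i (Finset.univ.filter fun j => Function.update l i false j = true) := by
    ext j
    rcases eq_or_ne j i with rfl | hj
    · simp [h]
    · simp [Function.update_of_ne hj, hj]
  have hi : i ∉ Finset.univ.filter fun j => Function.update l i false j = true := by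
    simp
  rw [wt, wt, hset, Finset.card_insert_of_notMem hi]

lemma upRate_ne_zero_imp {lam : ℝ} {f : Fin J → ℝ} {ζ : Fin J → (Fin N ≃ Fin N)}
    {l m : Fin N → Bool} (h : upRate lam f ζ l m ≠ 0) : wt m = wt l + 1 := by
  classical
  obtain ⟨i, -, hi⟩ := Finset.exists_ne_zero_of_sum_ne_zero h
  by_cases hc : l i = false ∧ m = Function.update l i true
  · rw [hc.2]; exact wt_update_true hc.1
  · simp [hc] at hi

lemma downRate_ne_zero_imp {ν : Fin N → ℝ} {l m : Fin N → Bool}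
    (h : downRate ν l m ≠ 0) :
    wt l = wt m + 1 ∧ (Finset.univ.filter fun i => l i ≠ m i).card = 1 := by
  classical
  obtain ⟨i, -, hi⟩ := Finset.exists_ne_zero_of_sum_ne_zero h
  by_cases hc : l i = true ∧ m = Function.update l i false
  · constructor
    · rw [hc.2]; exact (wt_update_false hc.1).symm
    · have hset : (Finset.univ.filter fun j => l j ≠ m j) = {i} := by
        ext j
        rcases eq_or_ne j i with rfl | hj
        · simp [hc.2, hc.1]
        · simp [hc.2, Function.update_of_ne hj, hj]
      simp [hset]
  · simp [hc] at hi

end AuxLemmas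
section AuxLemmas2

variable {N J : ℕ}

lemma upRate_nonneg {lam : ℝ} (hlam : 0 ≤ lam) {f : Fin J → ℝ} (hf : ∀ j, 0 ≤ f j)
    (ζ : Fin J → (Fin N ≃ Fin N)) (l m : Fin N → Bool) : 0 ≤ upRate lam f ζ l m := by
  classical
  refine Finset.sum_nonneg fun i _ => ?_
  split
  · exact mul_nonneg hlam (Finset.sum_nonneg fun j _ => by split <;> simp [hf j])
  · exact le_refl _

lemma totalUp_nonneg {lam : ℝ} (hlam : 0 ≤ lam) {f : Fin J → ℝ} (hf : ∀ j, 0 ≤ f j)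
    (ζ : Fin J → (Fin N ≃ Fin N)) (m : Fin N → Bool) : 0 ≤ totalUp lam f ζ m :=
  Finset.sum_nonneg fun l _ => upRate_nonneg hlam hf ζ m l

lemma totalDown_pos {ν : Fin N → ℝ} (hν : ∀ i, 0 < ν i) {m : Fin N → Bool}
    (h : wt m ≠ 0) : 0 < totalDown ν m := by
  classical
  have hne : (Finset.univ.filter fun i => m i = true).Nonempty :=
    Finset.card_pos.mp (Nat.pos_of_ne_zero h)
  obtain ⟨i, hi⟩ := hne
  have him : m i = true := (Finset.mem_filter.mp hi).2
  refine Finset.sum_pos' (fun j _ => ?_) ⟨i, Finset.mem_univ i, ?_⟩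
  · split
    · exact (hν j).le
    · exact le_refl _
  · simp [him, hν i]

lemma totalDown_bot {ν : Fin N → ℝ} : totalDown ν (fun _ => false : Fin N → Bool) = 0 := by
  simp [totalDown]

lemma totalUp_full {lam : ℝ} {f : Fin J → ℝ} {ζ : Fin J → (Fin N ≃ Fin N)} :
    totalUp lam f ζ (fullState N) = 0 := by
  simp [totalUp, upRate, fullState]

lemma layer_zero_eq : layer N 0 = {(fun _ => false : Fin N → Bool)} := by
  classical
  ext m
  simp only [layer, Finset.mem_filter, Finset.mem_univ, true_and, Finset.mem_singleton]
  constructor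
  · exact eq_bot_of_wt_zero
  · rintro rfl; simp [wt]

lemma layer_top_eq : layer N N = {fullState N} := by
  classical
  ext m
  simp only [layer, Finset.mem_filter, Finset.mem_univ, true_and, Finset.mem_singleton]
  constructor
  · exact eq_full_of_wt_top
  · rintro rfl; simp [wt, fullState]

lemma downRate_to_bot {ν : Fin N → ℝ} {l : Fin N → Bool} (h : wt l = 1) :
    downRate ν l (fun _ => false) = totalDown ν l := by
  classical
  unfold downRate totalDown
  refine Finset.sum_congr rfl fun i _ => ?_
  rcases hl : l i with hf | ht
  · simp [hl]
  · have h1 : wt (Function.update l i false) + 1 = wt l := wt_update_false hl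
    have h0 : wt (Function.update l i false) = 0 := by omega
    have := eq_bot_of_wt_zero h0
    simp [hl, this.symm]

lemma upRate_to_full {lam : ℝ} {f : Fin J → ℝ} {ζ : Fin J → (Fin N ≃ Fin N)}
    {l : Fin N → Bool} (h : wt l + 1 = N) :
    upRate lam f ζ l (fullState N) = totalUp lam f ζ l := by
  classical
  rw [totalUp, Finset.sum_eq_single (fullState N)]
  · intro m _ hm
    by_contra hne
    have := upRate_ne_zero_imp hne
    have : wt m = N := by omega
    exact hm (eq_full_of_wt_top this)
  · intro hmem; exact absurd (Finset.mem_univ _) hmem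

end AuxLemmas2
section AuxLemmas3

variable {N J : ℕ}

lemma sum_up_restrict (lam : ℝ) (f : Fin J → ℝ) (ζ : Fin J → (Fin N ≃ Fin N))
    (g : (Fin N → Bool) → ℝ) (m : Fin N → Bool) :
    ∑ l : Fin N → Bool, g l * upRate lam f ζ l m
      = ∑ l ∈ layer N (wt m - 1), g l * upRate lam f ζ l m := by
  classical
  refine (Finset.sum_subset (Finset.subset_univ _) fun l _ hl => ?_).symm
  by_contra hne
  have hup : upRate lam f ζ l m ≠ 0 := fun h0 => hne (by simp [h0])
  have := upRate_ne_zero_imp hup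
  exact hl (by simp [layer]; omega)

lemma sum_down_restrict (ν : Fin N → ℝ)
    (g : (Fin N → Bool) → ℝ) (m : Fin N → Bool) :
    ∑ l : Fin N → Bool, g l * downRate ν l m
      = ∑ l ∈ adjLayer (wt m + 1) m, g l * downRate ν l m := by
  classical
  refine (Finset.sum_subset (Finset.subset_univ _) fun l _ hl => ?_).symm
  by_contra hne
  have hdn : downRate ν l m ≠ 0 := fun h0 => hne (by simp [h0])
  obtain ⟨h1, h2⟩ := downRate_ne_zero_imp hdn
  exact hl (by simp [adjLayer, layer, h1, h2])

lemma wt_of_mem_layer {n : ℕ} {l : Fin N → Bool} (h : l ∈ layer N n) : wt l = n := by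
  simpa [layer] using h

lemma mem_layer_self {l : Fin N → Bool} : l ∈ layer N (wt l) := by simp [layer]

lemma wt_of_mem_adjLayer {n : ℕ} {m l : Fin N → Bool} (h : l ∈ adjLayer n m) : wt l = n :=
  wt_of_mem_layer (Finset.mem_filter.mp h).1

lemma range_succ_eq_insert (N : ℕ) : Finset.range (N + 1) = insert 0 (Finset.Icc 1 N) := by
  ext k
  simp [Finset.mem_range, Finset.mem_Icc, Nat.lt_succ_iff]
  omega

end AuxLemmas3
lemma keyAlg (qn qm Mn Ln Z c a u : ℝ) (hL : Ln ≠ 0) (hc : c ≠ 0) (h : qm * Ln = qn * Mn) :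
    qn * Z * c * (a * (Mn / Ln) * (u / c)) = qm * Z * a * u := by
  field_simp
  linear_combination (- Z) * a * u * h

/-- Proposition 1 (reformulation of the zero-capacity hypercube model). -/
theorem hypercube_reformulation
    {N J : ℕ} (hN : 2 ≤ N) (hJ : 1 ≤ J)
    (lam : ℝ) (hlam : 0 < lam)
    (f : Fin J → ℝ) (hf : ∀ j, 0 ≤ f j) (hfsum : ∑ j, f j = 1)
    (ν : Fin N → ℝ) (hν : ∀ i, 0 < ν i)
    (ζ : Fin J → (Fin N ≃ Fin N))
    (p : ℕ → (Fin N → Bool) → ℝ)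
    (hsol : IsCondSolution lam f ζ ν p)
    (hnonneg : ∀ n ≤ N, ∀ m ∈ layer N n, 0 ≤ p n m)
    (hlamPos : ∀ n ≤ N - 1, 0 < layerLamOf lam f ζ p n)
    (hmuPos : ∀ n, 1 ≤ n → n ≤ N → 0 < layerMuOf ν p n) :
    SatisfiesBalance lam f ζ ν (fun m =>
      ((∏ s ∈ Finset.Icc 1 (wt m), layerLamOf lam f ζ p (s - 1) / layerMuOf ν p s) *
          (1 + ∑ n ∈ Finset.Icc 1 N, ∏ s ∈ Finset.Icc 1 n,
              layerLamOf lam f ζ p (s - 1) / layerMuOf ν p s)⁻¹) *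
        p (wt m) m) := by
  classical
  obtain ⟨h0, hNfull, hrec, hnorm⟩ := hsol
  set L : ℕ → ℝ := layerLamOf lam f ζ p with hLdef
  set M : ℕ → ℝ := layerMuOf ν p with hMdef
  set q : ℕ → ℝ := fun n => ∏ s ∈ Finset.Icc 1 n, L (s - 1) / M s with hqdef
  set Z : ℝ := 1 + ∑ n ∈ Finset.Icc 1 N, ∏ s ∈ Finset.Icc 1 n, L (s - 1) / M s with hZdef
  have hq0 : q 0 = 1 := by simp [hqdef]
  have hmne : ∀ k, 1 ≤ k → k ≤ N → M k ≠ 0 := fun k h1 h2 => ne_of_gt (hmuPos k h1 h2)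
  have hlne : ∀ k, k ≤ N - 1 → L k ≠ 0 := fun k h => ne_of_gt (hlamPos k h)
  have hqpos : ∀ n, n ≤ N → 0 < q n := by
    intro n hn
    refine Finset.prod_pos fun s hs => ?_
    have hs' := Finset.mem_Icc.mp hs
    exact div_pos (hlamPos _ (by omega)) (hmuPos s (by omega) (by omega))
  have hZpos : 0 < Z := by
    have h1 : 0 ≤ ∑ n ∈ Finset.Icc 1 N, ∏ s ∈ Finset.Icc 1 n, L (s - 1) / M s :=
      Finset.sum_nonneg fun n hn => (hqpos n (Finset.mem_Icc.mp hn).2).le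
    rw [hZdef]; linarith
  have hZne : Z ≠ 0 := ne_of_gt hZpos
  have hflow : ∀ k, k ≤ N - 1 → q k * L k = q (k + 1) * M (k + 1) := by
    intro k hk
    have hsucc : q (k + 1) = q k * (L (k + 1 - 1) / M (k + 1)) :=
      Finset.prod_Icc_succ_top (by omega) _
    have hk1 : k + 1 - 1 = k := by omega
    rw [hsucc, hk1, mul_assoc, div_mul_cancel₀ _ (hmne (k + 1) (by omega) (by omega))]
  show SatisfiesBalance lam f ζ ν (fun m => q (wt m) * Z⁻¹ * p (wt m) m)
  constructor
  ·
      intro m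
      beta_reduce
      by_cases hw0 : wt m = 0
      · -- bottom state
        have hmbot : m = fun _ => false := eq_bot_of_wt_zero hw0
        subst hmbot
        have hwb : wt (fun _ => false : Fin N → Bool) = 0 := hw0
        have hbotmem : (fun _ => false : Fin N → Bool) ∈ layer N 0 := by
          rw [layer_zero_eq]; exact Finset.mem_singleton_self _
        have hupsum : ∑ l : Fin N → Bool,
            q (wt l) * Z⁻¹ * p (wt l) l * upRate lam f ζ l (fun _ => false) = 0 :=
          Finset.sum_eq_zero fun l _ => by
            have hz : upRate lam f ζ l (fun _ => false) = 0 := by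
              by_contra h
              have := upRate_ne_zero_imp h
              omega
            rw [hz, mul_zero]
        have hadj : adjLayer (wt (fun _ => false : Fin N → Bool) + 1)
            (fun _ => false : Fin N → Bool) = layer N 1 := by
          rw [hwb]
          ext l
          simp only [adjLayer, Finset.mem_filter]
          constructor
          · exact fun h => h.1
          · intro h
            refine ⟨h, ?_⟩
            have hfe : (Finset.univ.filter fun i => l i ≠ (fun _ => false : Fin N → Bool) i)
                = Finset.univ.filter fun i => l i = true := by
              ext i; simp
            rw [hfe]
            exact wt_of_mem_layer h
        rw [hupsum, sum_down_restrict, hadj, zero_add]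
        have hcon : ∀ l ∈ layer N 1,
            q (wt l) * Z⁻¹ * p (wt l) l * downRate ν l (fun _ => false)
            = q 1 * Z⁻¹ * (p 1 l * totalDown ν l) := by
          intro l hl
          have hw := wt_of_mem_layer hl
          rw [hw, downRate_to_bot hw]; ring
        rw [Finset.sum_congr rfl hcon, ← Finset.mul_sum]
        have hM1 : ∑ l ∈ layer N 1, p 1 l * totalDown ν l = M 1 := by rw [hMdef]; rfl
        have hL0 : totalUp lam f ζ (fun _ => false : Fin N → Bool) = L 0 := by
          rw [hLdef]
          show _ = ∑ m' ∈ layer N 0, p 0 m' * totalUp lam f ζ m'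
          rw [layer_zero_eq, Finset.sum_singleton, h0 _ hbotmem, one_mul]
        rw [hM1, hwb, hq0, h0 _ hbotmem, totalDown_bot, hL0]
        have hfl0 := hflow 0 (by omega)
        rw [hq0, one_mul] at hfl0
        linear_combination Z⁻¹ * hfl0
      · by_cases hwN : wt m = N
        · -- full state
          have hmfull : m = fullState N := eq_full_of_wt_top hwN
          subst hmfull
          have hwf : wt (fullState N) = N := hwN
          have hfullmem : fullState N ∈ layer N N := by
            rw [layer_top_eq]; exact Finset.mem_singleton_self _
          have hdsum : ∑ l : Fin N → Bool,
              q (wt l) * Z⁻¹ * p (wt l) l * downRate ν l (fullState N) = 0 :=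
            Finset.sum_eq_zero fun l _ => by
              have hz : downRate ν l (fullState N) = 0 := by
                by_contra h
                have h1 := (downRate_ne_zero_imp h).1
                have h2 := wt_le l
                omega
              rw [hz, mul_zero]
          rw [hdsum, sum_up_restrict, add_zero, hwf]
          have hcon : ∀ l ∈ layer N (N - 1),
              q (wt l) * Z⁻¹ * p (wt l) l * upRate lam f ζ l (fullState N)
              = q (N - 1) * Z⁻¹ * (p (N - 1) l * totalUp lam f ζ l) := by
            intro l hl
            have hw := wt_of_mem_layer hl
            rw [hw, upRate_to_full (by omega)]; ring
          rw [Finset.sum_congr rfl hcon, ← Finset.mul_sum]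
          have hLN : ∑ l ∈ layer N (N - 1), p (N - 1) l * totalUp lam f ζ l = L (N - 1) := by
            rw [hLdef]; rfl
          have hMN : totalDown ν (fullState N) = M N := by
            rw [hMdef]
            show _ = ∑ m' ∈ layer N N, p N m' * totalDown ν m'
            rw [layer_top_eq, Finset.sum_singleton, hNfull _ hfullmem, one_mul]
          rw [hLN, hNfull _ hfullmem, totalUp_full, hMN]
          have hfl := hflow (N - 1) (le_refl _)
          have hN1 : N - 1 + 1 = N := by omega
          rw [hN1] at hfl
          linear_combination (- Z⁻¹) * hfl
        · -- intermediate state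
          have hn1 : 1 ≤ wt m := by omega
          have hwle := wt_le m
          have hn2 : wt m ≤ N - 1 := by omega
          have hmem : m ∈ layer N (wt m) := mem_layer_self
          have hrecm := hrec (wt m) hn1 hn2 m hmem
          have hcpos : 0 < totalUp lam f ζ m + totalDown ν m :=
            add_pos_of_nonneg_of_pos (totalUp_nonneg hlam.le hf ζ m) (totalDown_pos hν (by omega))
          have hcne : totalUp lam f ζ m + totalDown ν m ≠ 0 := ne_of_gt hcpos
          have hfl1 : q (wt m - 1) * L (wt m - 1) = q (wt m) * M (wt m) := by
            have h' := hflow (wt m - 1) (by omega)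
            have h1 : wt m - 1 + 1 = wt m := by omega
            rwa [h1] at h'
          have hfl2 : q (wt m) * L (wt m) = q (wt m + 1) * M (wt m + 1) := hflow (wt m) hn2
          rw [sum_up_restrict, sum_down_restrict]
          have e1 : ∑ l ∈ layer N (wt m - 1),
              q (wt l) * Z⁻¹ * p (wt l) l * upRate lam f ζ l m
              = q (wt m) * Z⁻¹ * (totalUp lam f ζ m + totalDown ν m) *
                ∑ l ∈ layer N (wt m - 1),
                  p (wt m - 1) l * (M (wt m) / L (wt m - 1)) *
                    (upRate lam f ζ l m / (totalUp lam f ζ m + totalDown ν m)) := by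
            rw [Finset.mul_sum]
            refine Finset.sum_congr rfl fun l hl => ?_
            rw [wt_of_mem_layer hl]
            have hLne : L (wt m - 1) ≠ 0 := hlne _ (by omega)
            exact (keyAlg _ _ _ _ _ _ _ _ hLne hcne hfl1).symm
          have e2 : ∑ l ∈ adjLayer (wt m + 1) m,
              q (wt l) * Z⁻¹ * p (wt l) l * downRate ν l m
              = q (wt m) * Z⁻¹ * (totalUp lam f ζ m + totalDown ν m) *
                ∑ l ∈ adjLayer (wt m + 1) m,
                  p (wt m + 1) l * (L (wt m) / M (wt m + 1)) *
                    (downRate ν l m / (totalUp lam f ζ m + totalDown ν m)) := by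
            rw [Finset.mul_sum]
            refine Finset.sum_congr rfl fun l hl => ?_
            rw [wt_of_mem_adjLayer hl]
            have hMne : M (wt m + 1) ≠ 0 := hmne _ (by omega) (by omega)
            exact (keyAlg _ _ _ _ _ _ _ _ hMne hcne hfl2.symm).symm
          rw [e1, e2, ← mul_add, ← hrecm]
          ring
  ·
      have hfib : ∑ m : Fin N → Bool, q (wt m) * Z⁻¹ * p (wt m) m
          = ∑ n ∈ Finset.range (N + 1), ∑ m ∈ layer N n, q (wt m) * Z⁻¹ * p (wt m) m := by
        rw [← Finset.sum_fiberwise_of_maps_to (g := wt)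
          (fun m _ => Finset.mem_range.mpr (Nat.lt_succ_of_le (wt_le m)))
          (fun m => q (wt m) * Z⁻¹ * p (wt m) m)]
        rfl
      have hinner : ∀ n ∈ Finset.range (N + 1),
          ∑ m ∈ layer N n, q (wt m) * Z⁻¹ * p (wt m) m = q n * Z⁻¹ := by
        intro n hn
        have hn' : n ≤ N := by have := Finset.mem_range.mp hn; omega
        have hcon : ∀ m ∈ layer N n, q (wt m) * Z⁻¹ * p (wt m) m = q n * Z⁻¹ * p n m :=
          fun m hm => by rw [wt_of_mem_layer hm]
        rw [Finset.sum_congr rfl hcon, ← Finset.mul_sum, hnorm n hn', mul_one]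
      rw [hfib, Finset.sum_congr rfl hinner, range_succ_eq_insert,
        Finset.sum_insert (by simp), hq0, one_mul, ← Finset.sum_mul]
      have : ∑ n ∈ Finset.Icc 1 N, q n = ∑ n ∈ Finset.Icc 1 N, ∏ s ∈ Finset.Icc 1 n, L (s - 1) / M s := by
        simp [hqdef]
      rw [this]
      have hZ' : Z⁻¹ + (∑ n ∈ Finset.Icc 1 N, ∏ s ∈ Finset.Icc 1 n, L (s - 1) / M s) * Z⁻¹
          = Z * Z⁻¹ := by rw [hZdef]; ring
      rw [hZ', mul_inv_cancel₀ hZne]
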